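/- Let Q = [[Q₁, Q₂],[Q₂ᵀ, Q₃]] be a positive definite (n+m)×(n+m) real matrix and α > 0. The orthogonal projection of the ellipsoid {(x,y) ∈ ℝⁿ×ℝᵐ : (x,y)ᵀ Q (x,y) ≤ α} onto the x-coordinate subspace equals the ellipsoid {x ∈ ℝⁿ : xᵀ (Q₁ − Q₂ Q₃⁻¹ Q₂ᵀ) x ≤ α}. -/

import Mathlib

open Matrix

/-- The projection of an ellipsoid onto the x-coordinate subspace is the ellipsoid of
the Schur complement. -/
theorem stmt_7 {n m : ℕ} (Q₁ : Matrix (Fin n) (Fin n) ℝ) (Q₂ : Matrix (Fin n) (Fin m) ℝ)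
    (Q₃ : Matrix (Fin m) (Fin m) ℝ)
    (hQ : (Matrix.fromBlocks Q₁ Q₂ Q₂ᵀ Q₃).PosDef) (α : ℝ) (hα : 0 < α) :
    {x : Fin n → ℝ | ∃ y : Fin m → ℝ,
        (Sum.elim x y) ⬝ᵥ ((Matrix.fromBlocks Q₁ Q₂ Q₂ᵀ Q₃) *ᵥ (Sum.elim x y)) ≤ α}
      = {x : Fin n → ℝ | x ⬝ᵥ ((Q₁ - Q₂ * Q₃⁻¹ * Q₂ᵀ) *ᵥ x) ≤ α} := by
  have hT : Q₂ᴴ = Q₂ᵀ := conjTranspose_eq_transpose_of_trivial Q₂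
  have hQ3 : Q₃.PosDef := by
    refine PosDef.of_dotProduct_mulVec_pos ?_ ?_
    · ext i j
      have := congrFun (congrFun hQ.1 (Sum.inr i)) (Sum.inr j)
      simpa [conjTranspose_apply] using this
    · intro z hz
      have := hQ.dotProduct_mulVec_pos (x := Sum.elim 0 z) (by
        intro h
        exact hz (funext fun i => congrFun h (Sum.inr i)))
      simpa [fromBlocks_mulVec, sumElim_dotProduct_sumElim] using this
  haveI := hQ3.isUnit.invertible
  have key : ∀ x y, (Sum.elim x y) ⬝ᵥ ((Matrix.fromBlocks Q₁ Q₂ Q₂ᵀ Q₃) *ᵥ (Sum.elim x y))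
      = ((Q₃⁻¹ * Q₂ᵀ) *ᵥ x + y) ⬝ᵥ (Q₃ *ᵥ ((Q₃⁻¹ * Q₂ᵀ) *ᵥ x + y))
        + x ⬝ᵥ ((Q₁ - Q₂ * Q₃⁻¹ * Q₂ᵀ) *ᵥ x) := by
    intro x y
    have h := schur_complement_eq₂₂ (α := ℝ) Q₁ Q₂ x y hQ3.1
    rw [hT] at h
    simpa [dotProduct_mulVec, star_trivial] using h
  ext x
  simp only [Set.mem_setOf_eq]
  constructor
  · rintro ⟨y, hy⟩
    rw [key x y] at hy
    have h0 := hQ3.posSemidef.dotProduct_mulVec_nonneg ((Q₃⁻¹ * Q₂ᵀ) *ᵥ x + y)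
    simp only [star_trivial] at h0
    linarith
  · intro hx
    refine ⟨-((Q₃⁻¹ * Q₂ᵀ) *ᵥ x), ?_⟩
    rw [key]
    simp [hx]
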